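/- Let G be a bipartite 3-gem, let (i,j,k) be a permutation of (1,2,3), and let {u,v} be a j-twistor of G. Then the ji-twisting of G at {u,v} has exactly one fewer {j,k}-residue than G, i.e., b_jk(G') = b_jk(G) − 1 where G' denotes the twisted graph: the two distinct {j,k}-gons of G containing u and v merge into a single {j,k}-gon of G', and all other {j,k}-gons are unaffected. -/

import Mathlib

/-!
We model a (3+1)-graph on a finite nonempty vertex set `V` as a quadruple
`σ : Fin 4 → Equiv.Perm V` of fixed-point-free involutions whose generated
subgroup acts transitively on `V`.
-/

/-- `f` is a fixed-point-free involution. -/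
def IsFPFInvolution {V : Type*} (f : Equiv.Perm V) : Prop :=
  (∀ x, f x ≠ x) ∧ ∀ x, f (f x) = x

/-- `x` and `y` lie in the same `I`-residue: `y` is in the orbit of `x` under the
subgroup generated by the permutations of the colors in `I`. -/
def SameResidue {V : Type*} (σ : Fin 4 → Equiv.Perm V) (I : Set (Fin 4)) (x y : V) : Prop :=
  ∃ g ∈ Subgroup.closure (σ '' I), g x = y

/-- The set of `I`-residues (orbits on `V` of the subgroup generated by the
permutations of colors in `I`). -/
def residues {V : Type*} (σ : Fin 4 → Equiv.Perm V) (I : Set (Fin 4)) : Set (Set V) :=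
  {O | ∃ x, O = {y | SameResidue σ I x y}}

/-- The number of `I`-residues. -/
noncomputable def numResidues {V : Type*} (σ : Fin 4 → Equiv.Perm V) (I : Set (Fin 4)) : ℕ :=
  (residues σ I).ncard

/-- A (3+1)-graph: four fixed-point-free involutions generating a subgroup that acts
transitively on the vertex set. -/
def IsGraph31 {V : Type*} (σ : Fin 4 → Equiv.Perm V) : Prop :=
  (∀ c, IsFPFInvolution (σ c)) ∧ ∀ x y : V, SameResidue σ Set.univ x y

/-- `b(G)`: total number of bigons (`ij`-gons over the six unordered pairs of colors). -/
noncomputable def bCount {V : Type*} (σ : Fin 4 → Equiv.Perm V) : ℕ :=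
  ∑ p ∈ Finset.univ.filter (fun p : Fin 4 × Fin 4 => p.1 < p.2),
    numResidues σ ({p.1, p.2} : Set (Fin 4))

/-- `t(G)`: total number of 3-residues over the four 3-element subsets of colors. -/
noncomputable def tCount {V : Type*} (σ : Fin 4 → Equiv.Perm V) : ℕ :=
  ∑ c : Fin 4, numResidues σ (({c}ᶜ : Set (Fin 4)))

/-- A 3-gem: a (3+1)-graph with `v(G) + t(G) = b(G)`. -/
def IsGem {V : Type*} [Fintype V] (σ : Fin 4 → Equiv.Perm V) : Prop :=
  IsGraph31 σ ∧ Fintype.card V + tCount σ = bCount σ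

/-- A crystallization: a 3-gem with no 1-dipoles, i.e. for every color `c` and vertex `x`,
the vertices `x` and `σ c x` lie in the same `({0,1,2,3} \ {c})`-residue. -/
def IsCrystallization {V : Type*} [Fintype V] (σ : Fin 4 → Equiv.Perm V) : Prop :=
  IsGem σ ∧ ∀ (c : Fin 4) (x : V), SameResidue σ (({c}ᶜ : Set (Fin 4))) x (σ c x)

/-- `{u, v}` is a `t`-twistor of the bipartite gem `σ` (with parity map `ε`), where
`a`, `b` are the other two nonzero colors: `u ≠ v` have equal parity, lie in the same
`{0,t}`-residue and the same `{a,b}`-residue, and in distinct `{0,a}`-, `{t,b}`-,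
`{0,b}`- and `{t,a}`-residues. -/
def IsTwistor {V : Type*} (σ : Fin 4 → Equiv.Perm V) (ε : V → ZMod 2)
    (t a b : Fin 4) (u v : V) : Prop :=
  u ≠ v ∧ ε u = ε v ∧
  SameResidue σ ({0, t} : Set (Fin 4)) u v ∧
  SameResidue σ ({a, b} : Set (Fin 4)) u v ∧
  ¬ SameResidue σ ({0, a} : Set (Fin 4)) u v ∧
  ¬ SameResidue σ ({t, b} : Set (Fin 4)) u v ∧
  ¬ SameResidue σ ({0, b} : Set (Fin 4)) u v ∧
  ¬ SameResidue σ ({t, a} : Set (Fin 4)) u v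

/-- The `ji`-twisting at `{u,v}`: replace `σ i` by `τ ∘ σ i ∘ τ` and `σ j` by
`τ ∘ σ j ∘ τ`, where `τ` is the transposition exchanging `u` and `v`; the other two
permutations are unchanged. -/
def jiTwisting {V : Type*} [DecidableEq V] (σ : Fin 4 → Equiv.Perm V)
    (i j : Fin 4) (u v : V) : Fin 4 → Equiv.Perm V :=
  fun c => if c = i ∨ c = j then Equiv.swap u v * σ c * Equiv.swap u v else σ c

namespace JiTwistAux

open Relation Equiv

variable {V : Type*}

theorem sr_refl (σ : Fin 4 → Equiv.Perm V) (I : Set (Fin 4)) (x : V) :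
    SameResidue σ I x x :=
  ⟨1, one_mem _, Equiv.Perm.one_apply x⟩

theorem sr_symm {σ : Fin 4 → Equiv.Perm V} {I : Set (Fin 4)} {x y : V}
    (h : SameResidue σ I x y) : SameResidue σ I y x := by
  obtain ⟨g, hg, rfl⟩ := h
  exact ⟨g⁻¹, inv_mem hg, g.symm_apply_apply x⟩

theorem sr_trans {σ : Fin 4 → Equiv.Perm V} {I : Set (Fin 4)} {x y z : V}
    (h : SameResidue σ I x y) (h' : SameResidue σ I y z) : SameResidue σ I x z := by
  obtain ⟨g, hg, rfl⟩ := h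
  obtain ⟨g', hg', rfl⟩ := h'
  exact ⟨g' * g, mul_mem hg' hg, Equiv.Perm.mul_apply g' g x⟩

/-- The bridge: membership in the same `{c,d}`-residue is reflexive-transitive
reachability along `c`- and `d`-edges. -/
theorem sameResidue_pair_iff (σ : Fin 4 → Equiv.Perm V) (c d : Fin 4)
    (hc : ∀ x, σ c (σ c x) = x) (hd : ∀ x, σ d (σ d x) = x) (x y : V) :
    SameResidue σ ({c, d} : Set (Fin 4)) x y ↔
      Relation.ReflTransGen (fun p q => σ c p = q ∨ σ d p = q) x y := by
  have himg : σ '' ({c, d} : Set (Fin 4)) = {σ c, σ d} := by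
    simp [Set.image_insert_eq]
  constructor
  · rintro ⟨g, hg, rfl⟩
    rw [himg] at hg
    refine Subgroup.closure_induction
      (p := fun g _ => ∀ z, Relation.ReflTransGen (fun p q => σ c p = q ∨ σ d p = q) z (g z))
      ?_ ?_ ?_ ?_ hg x
    · rintro s hs z
      rcases hs with rfl | rfl
      · exact ReflTransGen.single (Or.inl rfl)
      · exact ReflTransGen.single (Or.inr rfl)
    · intro z
      simpa using ReflTransGen.refl
    · intro g h _ _ hgi hhi z
      exact (hhi z).trans (by simpa [Equiv.Perm.mul_apply] using hgi (h z))
    · intro g _ hgi z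
      have hsymm : Symmetric (fun p q : V => σ c p = q ∨ σ d p = q) := by
        rintro p q (h | h)
        · exact Or.inl (by rw [← h, hc])
        · exact Or.inr (by rw [← h, hd])
      have := hgi (g⁻¹ z)
      rw [show g (g⁻¹ z) = z from g.apply_symm_apply z] at this
      exact (by haveI : Std.Symm (fun p q : V => σ c p = q ∨ σ d p = q) := ⟨fun a b h => hsymm h⟩; exact fun x y h => Std.Symm.symm x y h : Symmetric (Relation.ReflTransGen (fun p q : V => σ c p = q ∨ σ d p = q))) this
  · intro h
    induction h with
    | refl => exact ⟨1, one_mem _, Equiv.Perm.one_apply x⟩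
    | tail _ hby ih =>
      obtain ⟨g, hg, rfl⟩ := ih
      rcases hby with h | h
      · exact ⟨σ c * g, mul_mem (Subgroup.subset_closure ⟨c, by simp, rfl⟩) hg, h⟩
      · exact ⟨σ d * g, mul_mem (Subgroup.subset_closure ⟨d, by simp, rfl⟩) hg, h⟩

/-- Generic decomposition lemma: if each `r`-step decomposes over `s`-reachability
possibly passing through `u`/`v`, so does `r`-reachability. -/
theorem reach_decomp {r s : V → V → Prop} (hssym : Symmetric s) (u v : V)
    (hstep : ∀ x y, r x y → Relation.ReflTransGen s x y ∨
      (Relation.ReflTransGen s x u ∧ Relation.ReflTransGen s v y) ∨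
      (Relation.ReflTransGen s x v ∧ Relation.ReflTransGen s u y)) :
    ∀ x y, Relation.ReflTransGen r x y → Relation.ReflTransGen s x y ∨
      (Relation.ReflTransGen s x u ∧ Relation.ReflTransGen s v y) ∨
      (Relation.ReflTransGen s x v ∧ Relation.ReflTransGen s u y) := by
  intro x y h
  induction h with
  | refl => exact Or.inl ReflTransGen.refl
  | tail _ hby ih =>
    rcases ih with g1 | ⟨g1, g2⟩ | ⟨g1, g2⟩ <;>
      rcases hstep _ _ hby with h1 | ⟨h1, h2⟩ | ⟨h1, h2⟩
    · exact Or.inl (g1.trans h1)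
    · exact Or.inr (Or.inl ⟨g1.trans h1, h2⟩)
    · exact Or.inr (Or.inr ⟨g1.trans h1, h2⟩)
    · exact Or.inr (Or.inl ⟨g1, g2.trans h1⟩)
    · exact Or.inr (Or.inl ⟨g1, h2⟩)
    · exact Or.inl (g1.trans h2)
    · exact Or.inr (Or.inr ⟨g1, g2.trans h1⟩)
    · exact Or.inl (g1.trans h2)
    · exact Or.inr (Or.inr ⟨g1, h2⟩)

section Master

variable [Fintype V] [DecidableEq V]

/-- The master equivalence: reachability in the rewired graph in terms of
reachability in the old graph. -/
theorem master (a b : Equiv.Perm V) (ε : V → ZMod 2)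
    (ha1 : ∀ x, a x ≠ x) (ha2 : ∀ x, a (a x) = x)
    (hb1 : ∀ x, b x ≠ x) (hb2 : ∀ x, b (b x) = x)
    (hεa : ∀ x, ε (a x) ≠ ε x) (hεb : ∀ x, ε (b x) ≠ ε x)
    (u v : V)
    (huv : ¬ Relation.ReflTransGen (fun p q => a p = q ∨ b p = q) u v) :
    ∀ x y, Relation.ReflTransGen
        (fun p q => (Equiv.swap u v * a * Equiv.swap u v) p = q ∨ b p = q) x y ↔
      (Relation.ReflTransGen (fun p q => a p = q ∨ b p = q) x y ∨
        ((Relation.ReflTransGen (fun p q => a p = q ∨ b p = q) u x ∨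
          Relation.ReflTransGen (fun p q => a p = q ∨ b p = q) v x) ∧
         (Relation.ReflTransGen (fun p q => a p = q ∨ b p = q) u y ∨
          Relation.ReflTransGen (fun p q => a p = q ∨ b p = q) v y))) := by
  set r : V → V → Prop := fun p q => a p = q ∨ b p = q with hr
  set r' : V → V → Prop :=
    fun p q => (Equiv.swap u v * a * Equiv.swap u v) p = q ∨ b p = q with hr'
  set τ : Equiv.Perm V := Equiv.swap u v with hτ
  have hτapp : ∀ p, (τ * a * τ) p = τ (a (τ p)) := by
    intro p; simp [Equiv.Perm.mul_apply]
  have hrsymm : Symmetric r := by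
    rintro p q (h | h)
    · exact Or.inl (by rw [← h, ha2])
    · exact Or.inr (by rw [← h, hb2])
  have hr'symm : Symmetric r' := by
    rintro p q (h | h)
    · refine Or.inl ?_
      rw [← h, hτapp, hτapp, Equiv.swap_apply_self, ha2, Equiv.swap_apply_self]
    · exact Or.inr (by rw [← h, hb2])
  have Rsym : Symmetric (Relation.ReflTransGen r) := by
    haveI : Std.Symm r := ⟨fun a b h => hrsymm h⟩
    exact fun x y h => Std.Symm.symm x y h
  have R'sym : Symmetric (Relation.ReflTransGen r') := by
    haveI : Std.Symm r' := ⟨fun a b h => hr'symm h⟩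
    exact fun x y h => Std.Symm.symm x y h
  have hne : u ≠ v := fun h => huv (h ▸ ReflTransGen.refl)
  have hau : a u ≠ v := fun h => huv (ReflTransGen.single (Or.inl h))
  have hav : a v ≠ u := fun h => huv (Rsym (ReflTransGen.single (Or.inl h)))
  -- step characterization: new step implies old decomposition
  have hstepA : ∀ x y, r' x y → Relation.ReflTransGen r x y ∨
      (Relation.ReflTransGen r x u ∧ Relation.ReflTransGen r v y) ∨
      (Relation.ReflTransGen r x v ∧ Relation.ReflTransGen r u y) := by
    rintro x y (h | h)
    · rw [hτapp] at h
      by_cases hx : x = u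
      · subst hx
        rw [Equiv.swap_apply_left] at h
        rw [Equiv.swap_apply_of_ne_of_ne hav (ha1 v)] at h
        exact Or.inr (Or.inl ⟨ReflTransGen.refl, h ▸ ReflTransGen.single (Or.inl rfl)⟩)
      · by_cases hx' : x = v
        · subst hx'
          rw [Equiv.swap_apply_right] at h
          rw [Equiv.swap_apply_of_ne_of_ne (ha1 u) hau] at h
          exact Or.inr (Or.inr ⟨ReflTransGen.refl, h ▸ ReflTransGen.single (Or.inl rfl)⟩)
        · rw [Equiv.swap_apply_of_ne_of_ne hx hx'] at h
          by_cases h1 : a x = u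
          · rw [h1, Equiv.swap_apply_left] at h
            refine Or.inr (Or.inl ⟨ReflTransGen.single (Or.inl h1), h ▸ ReflTransGen.refl⟩)
          · by_cases h2 : a x = v
            · rw [h2, Equiv.swap_apply_right] at h
              refine Or.inr (Or.inr ⟨ReflTransGen.single (Or.inl h2), h ▸ ReflTransGen.refl⟩)
            · rw [Equiv.swap_apply_of_ne_of_ne h1 h2] at h
              exact Or.inl (ReflTransGen.single (Or.inl h))
    · exact Or.inl (ReflTransGen.single (Or.inr h))
  -- step characterization: old step implies new decomposition
  have hstepB : ∀ x y, r x y → Relation.ReflTransGen r' x y ∨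
      (Relation.ReflTransGen r' x u ∧ Relation.ReflTransGen r' v y) ∨
      (Relation.ReflTransGen r' x v ∧ Relation.ReflTransGen r' u y) := by
    rintro x y (h | h)
    · by_cases hx : x = u
      · subst hx
        refine Or.inr (Or.inl ⟨ReflTransGen.refl, ReflTransGen.single (Or.inl ?_)⟩)
        rw [hτapp, Equiv.swap_apply_right, ← h]
        exact Equiv.swap_apply_of_ne_of_ne (ha1 x) hau
      · by_cases hx' : x = v
        · subst hx'
          refine Or.inr (Or.inr ⟨ReflTransGen.refl, ReflTransGen.single (Or.inl ?_)⟩)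
          rw [hτapp, Equiv.swap_apply_left, ← h]
          exact Equiv.swap_apply_of_ne_of_ne hav (ha1 x)
        · by_cases h1 : a x = u
          · have hxau : x = a u := by rw [← h1, ha2]
            refine Or.inr (Or.inr ⟨ReflTransGen.single (Or.inl ?_), h ▸ h1 ▸ ReflTransGen.refl⟩)
            rw [hτapp, Equiv.swap_apply_of_ne_of_ne hx hx', h1, Equiv.swap_apply_left]
          · by_cases h2 : a x = v
            · refine Or.inr (Or.inl ⟨ReflTransGen.single (Or.inl ?_), h ▸ h2 ▸ ReflTransGen.refl⟩)
              rw [hτapp, Equiv.swap_apply_of_ne_of_ne hx hx', h2, Equiv.swap_apply_right]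
            · refine Or.inl (ReflTransGen.single (Or.inl ?_))
              rw [hτapp, Equiv.swap_apply_of_ne_of_ne hx hx',
                Equiv.swap_apply_of_ne_of_ne h1 h2, h]
    · exact Or.inl (ReflTransGen.single (Or.inr h))
  have LemA := reach_decomp hrsymm u v hstepA
  have LemB := reach_decomp hr'symm u v hstepB
  -- the new graph connects u and v (walk around the old cycle of v; uses parity)
  have hzmod : ∀ p q w : ZMod 2, p ≠ q → w ≠ q → p = w := by decide
  set f : Equiv.Perm V := b * a with hf
  have hfapp : ∀ z, f z = b (a z) := by
    intro z; rw [hf, Equiv.Perm.mul_apply]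
  have hεstep : ∀ z, ε (f z) = ε z := by
    intro z
    rw [hfapp]
    exact hzmod _ _ _ (hεb _) ((hεa _).symm)
  have hεf : ∀ n, ε ((f ^ n) v) = ε v := by
    intro n
    induction n with
    | zero => simp
    | succ n ih =>
      rw [pow_succ', Equiv.Perm.mul_apply, hεstep, ih]
  have hRvfn : ∀ n, Relation.ReflTransGen r v ((f ^ n) v) := by
    intro n
    induction n with
    | zero => simpa using ReflTransGen.refl
    | succ n ih =>
      rw [pow_succ', Equiv.Perm.mul_apply, hfapp]
      exact (ih.tail (Or.inl rfl)).tail (Or.inr rfl)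
  have hfnu : ∀ n, (f ^ n) v ≠ u := by
    intro n h
    exact huv (Rsym (h ▸ hRvfn n))
  have hafnu : ∀ n, a ((f ^ n) v) ≠ u := by
    intro n h
    exact huv (Rsym (h ▸ (hRvfn n).tail (Or.inl rfl)))
  have hafnv : ∀ n, a ((f ^ n) v) ≠ v := by
    intro n h
    have := hεa ((f ^ n) v)
    rw [h, hεf n] at this
    exact this rfl
  have hWalk : ∀ n, 1 ≤ n → Relation.ReflTransGen r' (a v) ((f ^ n) v) := by
    intro n hn
    induction n, hn using Nat.le_induction with
    | base =>
      rw [pow_one, hfapp]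
      exact ReflTransGen.single (Or.inr rfl)
    | succ n hn ih =>
      rw [pow_succ', Equiv.Perm.mul_apply, hfapp]
      by_cases hv : (f ^ n) v = v
      · rw [hv]
        exact ReflTransGen.single (Or.inr rfl)
      · refine (ih.tail (Or.inl ?_)).tail (Or.inr rfl)
        rw [hτapp, Equiv.swap_apply_of_ne_of_ne (hfnu n) hv,
          Equiv.swap_apply_of_ne_of_ne (hafnu n) (hafnv n)]
  have havv : Relation.ReflTransGen r' (a v) v := by
    have := hWalk (orderOf f) (orderOf_pos f)
    rwa [pow_orderOf_eq_one, Equiv.Perm.one_apply] at this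
  have R'uv : Relation.ReflTransGen r' u v := by
    refine ReflTransGen.trans (ReflTransGen.single (Or.inl ?_)) havv
    rw [hτapp, Equiv.swap_apply_left]
    exact Equiv.swap_apply_of_ne_of_ne hav (ha1 v)
  -- assembling the equivalence
  have claimU : ∀ y, Relation.ReflTransGen r u y → Relation.ReflTransGen r' u y := by
    intro y h
    rcases LemB u y h with h' | ⟨_, h2⟩ | ⟨_, h2⟩
    · exact h'
    · exact R'uv.trans h2
    · exact h2
  have claimV : ∀ y, Relation.ReflTransGen r v y → Relation.ReflTransGen r' u y := by
    intro y h
    rcases LemB v y h with h' | ⟨_, h2⟩ | ⟨_, h2⟩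
    · exact R'uv.trans h'
    · exact R'uv.trans h2
    · exact h2
  have notR' : ∀ z, ¬ Relation.ReflTransGen r u z → ¬ Relation.ReflTransGen r v z →
      ¬ Relation.ReflTransGen r' z u ∧ ¬ Relation.ReflTransGen r' z v := by
    intro z h1 h2
    constructor
    · intro h
      rcases LemA z u h with h' | ⟨h', _⟩ | ⟨h', _⟩
      · exact h1 (Rsym h')
      · exact h1 (Rsym h')
      · exact h2 (Rsym h')
    · intro h
      rcases LemA z v h with h' | ⟨h', _⟩ | ⟨h', _⟩
      · exact h2 (Rsym h')
      · exact h1 (Rsym h')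
      · exact h2 (Rsym h')
  intro x y
  constructor
  · intro h
    rcases LemA x y h with h' | ⟨h1, h2⟩ | ⟨h1, h2⟩
    · exact Or.inl h'
    · exact Or.inr ⟨Or.inl (Rsym h1), Or.inr h2⟩
    · exact Or.inr ⟨Or.inr (Rsym h1), Or.inl h2⟩
  · rintro (h | ⟨hx, hy⟩)
    · by_cases hxc : Relation.ReflTransGen r u x ∨ Relation.ReflTransGen r v x
      · have hyc : Relation.ReflTransGen r u y ∨ Relation.ReflTransGen r v y := by
          rcases hxc with h' | h'
          · exact Or.inl (h'.trans h)
          · exact Or.inr (h'.trans h)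
        have e1 : Relation.ReflTransGen r' u x := hxc.elim (claimU x) (claimV x)
        have e2 : Relation.ReflTransGen r' u y := hyc.elim (claimU y) (claimV y)
        exact (R'sym e1).trans e2
      · push_neg at hxc
        obtain ⟨n1, n2⟩ := notR' x hxc.1 hxc.2
        rcases LemB x y h with h' | ⟨h1, _⟩ | ⟨h1, _⟩
        · exact h'
        · exact absurd h1 n1
        · exact absurd h1 n2
    · have e1 : Relation.ReflTransGen r' u x := hx.elim (claimU x) (claimV x)
      have e2 : Relation.ReflTransGen r' u y := hy.elim (claimU y) (claimV y)
      exact (R'sym e1).trans e2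

end Master

end JiTwistAux

/-- Let `G` be a bipartite 3-gem, `(i,j,k)` a permutation of `(1,2,3)`,
and `{u,v}` a `j`-twistor of `G`. Then the `ji`-twisting `G'` of `G` at `{u,v}` has
exactly one fewer `{j,k}`-residue than `G`: `b_jk(G') = b_jk(G) - 1`; the two distinct
`{j,k}`-gons of `G` containing `u` and `v` merge into a single `{j,k}`-gon of `G'`, and
all other `{j,k}`-gons are unaffected. -/
theorem jiTwisting_merges_jk_gons {V : Type*} [Fintype V] [DecidableEq V] [Nonempty V]
    (σ : Fin 4 → Equiv.Perm V) (ε : V → ZMod 2)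
    (hgem : IsGem σ) (hbip : ∀ (c : Fin 4) (x : V), ε (σ c x) ≠ ε x)
    (i j k : Fin 4) (hperm : ({i, j, k} : Finset (Fin 4)) = ({1, 2, 3} : Finset (Fin 4)))
    (u v : V) (htw : IsTwistor σ ε j i k u v) :
    numResidues (jiTwisting σ i j u v) ({j, k} : Set (Fin 4)) =
      numResidues σ ({j, k} : Set (Fin 4)) - 1 ∧
    {y | SameResidue (jiTwisting σ i j u v) ({j, k} : Set (Fin 4)) u y} =
      {y | SameResidue σ ({j, k} : Set (Fin 4)) u y} ∪
        {y | SameResidue σ ({j, k} : Set (Fin 4)) v y} ∧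
    ∀ R ∈ residues σ ({j, k} : Set (Fin 4)), u ∉ R → v ∉ R →
      R ∈ residues (jiTwisting σ i j u v) ({j, k} : Set (Fin 4)) := by
  classical
  obtain ⟨hij, hik, hjk⟩ : i ≠ j ∧ i ≠ k ∧ j ≠ k := by
    revert hperm; fin_cases i <;> fin_cases j <;> fin_cases k <;> decide
  set σ' : Fin 4 → Equiv.Perm V := jiTwisting σ i j u v with hσ'
  have hfpf : ∀ c, IsFPFInvolution (σ c) := hgem.1.1
  have h'j : σ' j = Equiv.swap u v * σ j * Equiv.swap u v := by
    simp [hσ', jiTwisting]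
  have h'k : σ' k = σ k := by
    have : ¬ (k = i ∨ k = j) := by
      rintro (h | h)
      · exact hik h.symm
      · exact hjk h.symm
    simp [hσ', jiTwisting, this]
  have hτapp : ∀ p, (Equiv.swap u v * σ j * Equiv.swap u v) p = Equiv.swap u v (σ j (Equiv.swap u v p)) := by
    intro p; simp [Equiv.Perm.mul_apply]
  have h'jinv : ∀ x, σ' j (σ' j x) = x := by
    intro x
    rw [h'j, hτapp, hτapp, Equiv.swap_apply_self, (hfpf j).2, Equiv.swap_apply_self]
  have h'kinv : ∀ x, σ' k (σ' k x) = x := by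
    intro x; rw [h'k]; exact (hfpf k).2 x
  -- bridges
  have hb1 : ∀ x y, SameResidue σ ({j, k} : Set (Fin 4)) x y ↔
      Relation.ReflTransGen (fun p q => σ j p = q ∨ σ k p = q) x y :=
    JiTwistAux.sameResidue_pair_iff σ j k (hfpf j).2 (hfpf k).2
  have hb2 : ∀ x y, SameResidue σ' ({j, k} : Set (Fin 4)) x y ↔
      Relation.ReflTransGen
        (fun p q => (Equiv.swap u v * σ j * Equiv.swap u v) p = q ∨ σ k p = q) x y := by
    intro x y
    rw [JiTwistAux.sameResidue_pair_iff σ' j k h'jinv h'kinv x y]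
    simp only [h'j, h'k]
  have hnuv : ¬ SameResidue σ ({j, k} : Set (Fin 4)) u v := htw.2.2.2.2.2.1
  have huvR : ¬ Relation.ReflTransGen (fun p q => σ j p = q ∨ σ k p = q) u v := by
    rw [← hb1]; exact hnuv
  have hM := JiTwistAux.master (σ j) (σ k) ε (hfpf j).1 (hfpf j).2 (hfpf k).1 (hfpf k).2
    (hbip j) (hbip k) u v huvR
  -- master equivalence at the SameResidue level
  have hMS : ∀ x y, SameResidue σ' ({j, k} : Set (Fin 4)) x y ↔
      (SameResidue σ ({j, k} : Set (Fin 4)) x y ∨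
        ((SameResidue σ ({j, k} : Set (Fin 4)) u x ∨ SameResidue σ ({j, k} : Set (Fin 4)) v x) ∧
         (SameResidue σ ({j, k} : Set (Fin 4)) u y ∨ SameResidue σ ({j, k} : Set (Fin 4)) v y))) := by
    intro x y
    rw [hb2, hM]
    simp only [← hb1]
  set Sr : V → V → Prop := SameResidue σ ({j, k} : Set (Fin 4)) with hSr
  set Sr' : V → V → Prop := SameResidue σ' ({j, k} : Set (Fin 4)) with hSr'
  set A : Set V := {y | Sr u y} with hA
  set B : Set V := {y | Sr v y} with hB
  set T : Set (Set V) := {O : Set V | ∃ x, ¬ (Sr u x ∨ Sr v x) ∧ O = {y | Sr x y}} with hT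
  have F1 : ∀ x, (Sr u x ∨ Sr v x) → {y | Sr' x y} = A ∪ B := by
    intro x hx
    ext y
    simp only [hA, hB, Set.mem_union, Set.mem_setOf_eq]
    rw [hMS]
    constructor
    · rintro (h | ⟨_, hy⟩)
      · rcases hx with h' | h'
        · exact Or.inl (JiTwistAux.sr_trans h' h)
        · exact Or.inr (JiTwistAux.sr_trans h' h)
      · exact hy
    · intro hy
      exact Or.inr ⟨hx, hy⟩
  have F2 : ∀ x, ¬ (Sr u x ∨ Sr v x) → {y | Sr' x y} = {y | Sr x y} := by
    intro x hx
    ext y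
    simp only [Set.mem_setOf_eq]
    rw [hMS]
    constructor
    · rintro (h | ⟨hx', _⟩)
      · exact h
      · exact absurd hx' hx
    · exact fun h => Or.inl h
  have F3 : ∀ x, Sr u x → {y | Sr x y} = A := by
    intro x hx
    ext y
    simp only [hA, Set.mem_setOf_eq]
    exact ⟨fun h => JiTwistAux.sr_trans hx h,
      fun h => JiTwistAux.sr_trans (JiTwistAux.sr_symm hx) h⟩
  have F4 : ∀ x, Sr v x → {y | Sr x y} = B := by
    intro x hx
    ext y
    simp only [hB, Set.mem_setOf_eq]
    exact ⟨fun h => JiTwistAux.sr_trans hx h,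
      fun h => JiTwistAux.sr_trans (JiTwistAux.sr_symm hx) h⟩
  have hres' : residues σ' ({j, k} : Set (Fin 4)) = insert (A ∪ B) T := by
    ext O
    constructor
    · rintro ⟨x, rfl⟩
      by_cases hx : Sr u x ∨ Sr v x
      · rw [show {y | SameResidue σ' ({j, k} : Set (Fin 4)) x y} = A ∪ B from F1 x hx]
        exact Set.mem_insert _ _
      · refine Set.mem_insert_of_mem _ ⟨x, hx, ?_⟩
        exact F2 x hx
    · rintro (rfl | ⟨x, hx, rfl⟩)
      · exact ⟨u, (F1 u (Or.inl (JiTwistAux.sr_refl σ _ u))).symm⟩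
      · exact ⟨x, (F2 x hx).symm⟩
  have hres : residues σ ({j, k} : Set (Fin 4)) = insert A (insert B T) := by
    ext O
    constructor
    · rintro ⟨x, rfl⟩
      by_cases hx : Sr u x
      · rw [show {y | SameResidue σ ({j, k} : Set (Fin 4)) x y} = A from F3 x hx]
        exact Set.mem_insert _ _
      · by_cases hx' : Sr v x
        · rw [show {y | SameResidue σ ({j, k} : Set (Fin 4)) x y} = B from F4 x hx']
          exact Set.mem_insert_of_mem _ (Set.mem_insert _ _)
        · exact Set.mem_insert_of_mem _ (Set.mem_insert_of_mem _
            ⟨x, by simp [hx, hx'], rfl⟩)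
    · rintro (rfl | rfl | ⟨x, _, rfl⟩)
      · exact ⟨u, rfl⟩
      · exact ⟨v, rfl⟩
      · exact ⟨x, rfl⟩
  have hvB : v ∈ B := JiTwistAux.sr_refl σ _ v
  have huA : u ∈ A := JiTwistAux.sr_refl σ _ u
  have hvA : v ∉ A := hnuv
  have huB : u ∉ B := fun h => hnuv (JiTwistAux.sr_symm h)
  have hAB : A ≠ B := fun h => hvA (h ▸ hvB)
  have hAT : A ∉ T := by
    rintro ⟨x, hx, hEq⟩
    have : x ∈ A := hEq ▸ (JiTwistAux.sr_refl σ _ x : x ∈ {y | Sr x y})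
    exact hx (Or.inl this)
  have hBT : B ∉ T := by
    rintro ⟨x, hx, hEq⟩
    have : x ∈ B := hEq ▸ (JiTwistAux.sr_refl σ _ x : x ∈ {y | Sr x y})
    exact hx (Or.inr this)
  have hCT : A ∪ B ∉ T := by
    rintro ⟨x, hx, hEq⟩
    have : x ∈ A ∪ B := hEq ▸ (JiTwistAux.sr_refl σ _ x : x ∈ {y | Sr x y})
    exact hx this
  refine ⟨?_, ?_, ?_⟩
  · rw [numResidues, numResidues, hres, hres']
    rw [Set.ncard_insert_of_notMem hCT (Set.toFinite T)]
    rw [Set.ncard_insert_of_notMem (by simp [hAB, hAT]) (Set.toFinite _)]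
    rw [Set.ncard_insert_of_notMem hBT (Set.toFinite T)]
    omega
  · exact F1 u (Or.inl (JiTwistAux.sr_refl σ _ u))
  · rintro R ⟨x, rfl⟩ hu hv
    have hx : ¬ (Sr u x ∨ Sr v x) := by
      rintro (h | h)
      · exact hu (JiTwistAux.sr_symm h)
      · exact hv (JiTwistAux.sr_symm h)
    exact ⟨x, (F2 x hx).symm⟩
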